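/- Let d > 2 and θ ≥ 1. Define g(a) = ((d-2)e^{-a(θ+d-2)} + θ)/(θ+d-2))^{-1/(d-2)} - 1. Then ∫₀^∞ θ e^{-t(θ+d-2)} (1+g(t))^{d-2} dt = (θ/(d-2))·log((d+θ-2)/θ). -/

import Mathlib

open Real MeasureTheory

/-- the detection-probability integral for the first-timestamp estimator
under diffusion evaluates to `(θ/(d-2))·log((d+θ-2)/θ)`. -/
theorem diffusion_first_timestamp_integral (d θ : ℝ) (hd : 2 < d) (hθ : 1 ≤ θ)
    (g : ℝ → ℝ)
    (hg : ∀ a : ℝ, g a =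
      (((d - 2) * Real.exp (-(a * (θ + d - 2))) + θ) / (θ + d - 2)) ^ (-(1 / (d - 2))) - 1) :
    ∫ t in Set.Ioi (0 : ℝ), θ * Real.exp (-(t * (θ + d - 2))) * (1 + g t) ^ (d - 2)
      = (θ / (d - 2)) * Real.log ((d + θ - 2) / θ) := by
  set c : ℝ := θ + d - 2 with hc_def
  have hθ0 : (0 : ℝ) < θ := lt_of_lt_of_le one_pos hθ
  have hd2 : (0 : ℝ) < d - 2 := by linarith
  have hc : (0 : ℝ) < c := by rw [hc_def]; linarith
  have hden : ∀ t : ℝ, (0 : ℝ) < (d - 2) * Real.exp (-(t * c)) + θ := by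
    intro t
    have := Real.exp_pos (-(t * c))
    nlinarith
  -- rewrite integrand
  have hint : ∀ t : ℝ,
      θ * Real.exp (-(t * c)) * (1 + g t) ^ (d - 2)
        = θ * c * Real.exp (-(t * c)) / ((d - 2) * Real.exp (-(t * c)) + θ) := by
    intro t
    have hX : (0 : ℝ) < ((d - 2) * Real.exp (-(t * c)) + θ) / c :=
      div_pos (hden t) hc
    have h1 : 1 + g t = (((d - 2) * Real.exp (-(t * c)) + θ) / c) ^ (-(1 / (d - 2))) := by
      rw [hg t]; ring
    have he : -(1 / (d - 2)) * (d - 2) = -1 := by field_simp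
    rw [h1, ← Real.rpow_mul hX.le, he, Real.rpow_neg_one]
    rw [inv_div]
    field_simp
  -- antiderivative
  set F : ℝ → ℝ := fun t => -(θ / (d - 2)) * Real.log ((d - 2) * Real.exp (-(t * c)) + θ)
    with hF_def
  have hderiv : ∀ t : ℝ, HasDerivAt F
      (θ * c * Real.exp (-(t * c)) / ((d - 2) * Real.exp (-(t * c)) + θ)) t := by
    intro t
    have h1 : HasDerivAt (fun t : ℝ => -(t * c)) (-c) t := (hasDerivAt_mul_const c).neg
    have h2 : HasDerivAt (fun t : ℝ => (d - 2) * Real.exp (-(t * c)) + θ)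
        ((d - 2) * (Real.exp (-(t * c)) * (-c))) t :=
      ((h1.exp).const_mul (d - 2)).add_const θ
    have h3 := (h2.log (hden t).ne').const_mul (-(θ / (d - 2)))
    convert h3 using 1
    · rfl
    · rfl
    have h4 := hd2.ne'
    have h5 := (hden t).ne'
    field_simp
  have hpos : ∀ t : ℝ, 0 ≤ θ * c * Real.exp (-(t * c)) / ((d - 2) * Real.exp (-(t * c)) + θ) := by
    intro t
    positivity
  have hlim : Filter.Tendsto F Filter.atTop (nhds (-(θ / (d - 2)) * Real.log θ)) := by
    have h0 : Filter.Tendsto (fun t : ℝ => -(t * c)) Filter.atTop Filter.atBot := by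
      have : Filter.Tendsto (fun t : ℝ => t * c) Filter.atTop Filter.atTop :=
        Filter.Tendsto.atTop_mul_const hc Filter.tendsto_id
      exact Filter.tendsto_neg_atTop_atBot.comp this
    have h1 : Filter.Tendsto (fun t : ℝ => Real.exp (-(t * c))) Filter.atTop (nhds 0) :=
      Real.tendsto_exp_atBot.comp h0
    have h2 : Filter.Tendsto (fun t : ℝ => (d - 2) * Real.exp (-(t * c)) + θ)
        Filter.atTop (nhds θ) := by
      have := (h1.const_mul (d - 2)).add_const θ
      simpa using this
    have h3 := ((Real.continuousAt_log hθ0.ne').tendsto.comp h2).const_mul (-(θ / (d - 2)))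
    exact h3
  have key : (∫ t in Set.Ioi (0 : ℝ),
        θ * c * Real.exp (-(t * c)) / ((d - 2) * Real.exp (-(t * c)) + θ))
      = -(θ / (d - 2)) * Real.log θ - F 0 :=
    integral_Ioi_of_hasDerivAt_of_nonneg' (fun x _ => hderiv x) (fun x _ => hpos x) hlim
  calc ∫ t in Set.Ioi (0 : ℝ), θ * Real.exp (-(t * c)) * (1 + g t) ^ (d - 2)
      = ∫ t in Set.Ioi (0 : ℝ),
          θ * c * Real.exp (-(t * c)) / ((d - 2) * Real.exp (-(t * c)) + θ) := by
        congr 1; funext t; exact hint t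
    _ = -(θ / (d - 2)) * Real.log θ - F 0 := key
    _ = (θ / (d - 2)) * Real.log ((d + θ - 2) / θ) := by
        rw [hF_def]
        simp only [neg_mul, zero_mul, neg_zero, Real.exp_zero, mul_one]
        rw [Real.log_div (by linarith) hθ0.ne']
        have : d - 2 + θ = d + θ - 2 := by ring
        rw [this]
        ring
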